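/- Let y, z ∈ ℕ and L ≥ 0 with binary digits satisfying (ε_{L+1}^{(y)}, ε_{L+2}^{(y)}, ε_L^{(z)}, ε_{L+1}^{(z)}, ε_{L+2}^{(z)}) = (1,0,0,1,0). Set y' = y − 2^{L+1}, z' = z + 2^{L+1}. Then y' + z' = y + z, the digits satisfy (ε_{L+1}^{(y')}, ε_{L+2}^{(y')}, ε_L^{(z')}, ε_{L+1}^{(z')}, ε_{L+2}^{(z')}) = (0,0,0,0,1), and the total number of binary ones of y' plus that of z' is exactly one less than the total number of binary ones of y plus that of z. -/

import Mathlib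

/-- Thue–Morse set: nonnegative integers with an even number of binary ones. -/
def A0 : Set ℕ := {n : ℕ | Even ((Nat.digits 2 n).count 1)}

/-- Number of representations n = a + a', a < a', a, a' ∈ A. -/
noncomputable def R2 (A : Set ℕ) (n : ℕ) : ℕ :=
  {p : ℕ × ℕ | p.1 < p.2 ∧ p.1 + p.2 = n ∧ p.1 ∈ A ∧ p.2 ∈ A}.ncard

/-- Number of representations n = a + a', a ≤ a', a, a' ∈ A. -/
noncomputable def R3 (A : Set ℕ) (n : ℕ) : ℕ :=
  {p : ℕ × ℕ | p.1 ≤ p.2 ∧ p.1 + p.2 = n ∧ p.1 ∈ A ∧ p.2 ∈ A}.ncard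

/-- Number of ordered pairs (a,b), a ∈ A, b ∈ B, a + b = n. -/
noncomputable def RAB (A B : Set ℕ) (n : ℕ) : ℕ :=
  {p : ℕ × ℕ | p.1 + p.2 = n ∧ p.1 ∈ A ∧ p.2 ∈ B}.ncard

lemma cnt_add : ∀ (k n : ℕ), n.testBit k = false →
    (Nat.digits 2 (n + 2 ^ k)).count 1 = (Nat.digits 2 n).count 1 + 1 := by
  intro k
  induction k with
  | zero =>
    intro n h
    simp only [Nat.testBit_zero, decide_eq_false_iff_not] at h
    have hn2 : n % 2 = 0 := by omega
    rcases Nat.eq_zero_or_pos n with rfl | hn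
    · simp
    · rw [pow_zero, Nat.digits_def' (by norm_num : 1 < 2) (by omega : 0 < n + 1),
        Nat.digits_def' (by norm_num : 1 < 2) hn]
      have h1 : (n + 1) % 2 = 1 := by omega
      have h2 : (n + 1) / 2 = n / 2 := by omega
      rw [h1, h2, hn2]
      simp [List.count_cons]
  | succ k ih =>
    intro n h
    have h2 : (n / 2).testBit k = false := by rw [Nat.testBit_div_two]; exact h
    have hpow : (2:ℕ) ^ (k + 1) = 2 * 2 ^ k := by ring
    have hd1 : (n + 2 ^ (k + 1)) % 2 = n % 2 := by rw [hpow]; omega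
    have hd2 : (n + 2 ^ (k + 1)) / 2 = n / 2 + 2 ^ k := by rw [hpow]; omega
    rw [Nat.digits_def' (by norm_num : 1 < 2) (by positivity : 0 < n + 2 ^ (k + 1)),
      hd1, hd2]
    rcases Nat.eq_zero_or_pos n with rfl | hn
    · simpa using ih 0 (by simp)
    · rw [Nat.digits_def' (by norm_num : 1 < 2) hn]
      simp only [List.count_cons]
      rw [ih (n / 2) h2]
      ring

lemma tb_add : ∀ (k n i : ℕ), n.testBit k = false →
    (n + 2 ^ k).testBit i = if i = k then true else n.testBit i := by
  intro k
  induction k with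
  | zero =>
    intro n i h
    simp only [Nat.testBit_zero, decide_eq_false_iff_not] at h
    have hn2 : n % 2 = 0 := by omega
    cases i with
    | zero => simp; omega
    | succ j =>
      simp only [pow_zero, Nat.testBit_add_one, Nat.succ_ne_zero, if_false]
      have : (n + 1) / 2 = n / 2 := by omega
      rw [this]
  | succ k ih =>
    intro n i h
    have h2 : (n / 2).testBit k = false := by rw [Nat.testBit_div_two]; exact h
    have hpow : (2:ℕ) ^ (k + 1) = 2 * 2 ^ k := by ring
    cases i with
    | zero =>
      simp only [Nat.testBit_zero, Nat.succ_ne_zero, if_false, Nat.zero_eq]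
      have : (n + 2 ^ (k + 1)) % 2 = n % 2 := by rw [hpow]; omega
      rw [this]
      simp [Ne.symm (Nat.succ_ne_zero k)]
    | succ j =>
      have hd2 : (n + 2 ^ (k + 1)) / 2 = n / 2 + 2 ^ k := by rw [hpow]; omega
      rw [Nat.testBit_add_one, hd2, ih (n / 2) j h2, Nat.testBit_add_one]
      by_cases hj : j = k <;> simp [hj]

lemma decomp (n k : ℕ) (h : n.testBit k = true) :
    (n - 2 ^ k).testBit k = false ∧ n = (n - 2 ^ k) + 2 ^ k := by
  have hp : (0:ℕ) < 2 ^ k := Nat.pow_pos (by norm_num)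
  have hge : 2 ^ k ≤ n := Nat.ge_two_pow_of_testBit h
  have hq : n / 2 ^ k % 2 = 1 := by simpa [Nat.testBit_eq_decide_div_mod_eq] using h
  have hdm : 2 ^ k * (n / 2 ^ k) + n % 2 ^ k = n := Nat.div_add_mod n (2 ^ k)
  have hrlt : n % 2 ^ k < 2 ^ k := Nat.mod_lt _ hp
  have hq1 : 1 ≤ n / 2 ^ k := Nat.one_le_iff_ne_zero.mpr (fun h0 => by rw [h0] at hq; simp at hq)
  have hqe : 2 ^ k * (n / 2 ^ k) = 2 ^ k * (n / 2 ^ k - 1) + 2 ^ k := by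
    conv_lhs => rw [← Nat.sub_add_cancel hq1]
    rw [Nat.mul_add, Nat.mul_one]
  have hsub : n - 2 ^ k = 2 ^ k * (n / 2 ^ k - 1) + n % 2 ^ k := by omega
  have hdiv : (n - 2 ^ k) / 2 ^ k = n / 2 ^ k - 1 := by
    rw [hsub, Nat.mul_add_div hp, Nat.div_eq_of_lt hrlt, Nat.add_zero]
  constructor
  · rw [Nat.testBit_eq_decide_div_mod_eq, hdiv]
    simp; omega
  · omega

theorem stmt_13 (y z L : ℕ)
    (h : (y.testBit (L + 1), y.testBit (L + 2),
          z.testBit L, z.testBit (L + 1), z.testBit (L + 2))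
        = (true, false, false, true, false)) :
    (y - 2 ^ (L + 1)) + (z + 2 ^ (L + 1)) = y + z ∧
    ((y - 2 ^ (L + 1)).testBit (L + 1), (y - 2 ^ (L + 1)).testBit (L + 2),
      (z + 2 ^ (L + 1)).testBit L, (z + 2 ^ (L + 1)).testBit (L + 1),
      (z + 2 ^ (L + 1)).testBit (L + 2))
        = (false, false, false, false, true) ∧
    (Nat.digits 2 (y - 2 ^ (L + 1))).count 1 + (Nat.digits 2 (z + 2 ^ (L + 1))).count 1 + 1
      = (Nat.digits 2 y).count 1 + (Nat.digits 2 z).count 1 := by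
  simp only [Prod.mk.injEq] at h
  obtain ⟨hy1, hy2, hz0, hz1, hz2⟩ := h
  obtain ⟨hm0, hmy⟩ := decomp y (L + 1) hy1
  obtain ⟨hw0, hwz⟩ := decomp z (L + 1) hz1
  set m := y - 2 ^ (L + 1) with hm
  set w := z - 2 ^ (L + 1) with hw
  -- bits of m
  have hm2 : m.testBit (L + 2) = false := by
    rw [hmy, tb_add _ _ _ hm0] at hy2
    simpa using hy2
  -- bits of w
  have hwL : w.testBit L = false := by
    rw [hwz, tb_add _ _ _ hw0] at hz0
    simpa using hz0
  have hw2 : w.testBit (L + 2) = false := by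
    rw [hwz, tb_add _ _ _ hw0] at hz2
    simpa using hz2
  have hz' : z + 2 ^ (L + 1) = w + 2 ^ (L + 2) := by
    have : (2:ℕ) ^ (L + 2) = 2 ^ (L + 1) + 2 ^ (L + 1) := by ring
    omega
  refine ⟨by omega, ?_, ?_⟩
  · rw [hz']
    simp only [tb_add _ _ _ hw2, hm0, hm2, Prod.mk.injEq]
    simp [hwL, hw0]
  · have c1 : (Nat.digits 2 y).count 1 = (Nat.digits 2 m).count 1 + 1 := by
      conv_lhs => rw [hmy]
      rw [cnt_add _ _ hm0]
    have c2 : (Nat.digits 2 z).count 1 = (Nat.digits 2 w).count 1 + 1 := by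
      conv_lhs => rw [hwz]
      rw [cnt_add _ _ hw0]
    have c3 : (Nat.digits 2 (z + 2 ^ (L + 1))).count 1 = (Nat.digits 2 w).count 1 + 1 := by
      rw [hz', cnt_add _ _ hw2]
    omega
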